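/- Let $a < b$ and fix $z \in \mathbb{R}$ with $z \neq a$ and $z \neq b$. Then $\lim_{\rho \to 0^+} \rho\, \partial_\rho U_{[a,b]}(\rho,z) = 2$ if $a < z < b$, while $\lim_{\rho \to 0^+} \rho\, \partial_\rho U_{[a,b]}(\rho,z) = 0$ if $z < a$ or $z > b$. -/

import Mathlib

open Filter Topology

/-- The Green's function `U_{[a,b]}(ρ,z) = log(r_a - z_a) - log(r_b - z_b)` of a uniform
charge distribution along the interval `[a,b]` of the `z`-axis, where
`r_c = √(ρ² + (z-c)²)` and `z_c = z - c`. -/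
noncomputable def intervalGreen (a b ρ z : ℝ) : ℝ :=
  Real.log (Real.sqrt (ρ ^ 2 + (z - a) ^ 2) - (z - a)) -
    Real.log (Real.sqrt (ρ ^ 2 + (z - b) ^ 2) - (z - b))

private lemma ig_lt_sqrt {w ρ : ℝ} (hρ : 0 < ρ) : w < Real.sqrt (ρ ^ 2 + w ^ 2) := by
  have h1 : |w| < Real.sqrt (ρ ^ 2 + w ^ 2) := by
    rw [← Real.sqrt_sq_eq_abs]
    exact Real.sqrt_lt_sqrt (sq_nonneg w) (by nlinarith)
  exact lt_of_le_of_lt (le_abs_self w) h1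

private lemma ig_hasDeriv (w : ℝ) (hw : w ≠ 0) {ρ : ℝ} (hρ : 0 < ρ) :
    HasDerivAt (fun ρ' : ℝ => Real.log (Real.sqrt (ρ' ^ 2 + w ^ 2) - w))
      ((ρ / Real.sqrt (ρ ^ 2 + w ^ 2)) / (Real.sqrt (ρ ^ 2 + w ^ 2) - w)) ρ := by
  have hs : (ρ ^ 2 + w ^ 2) ≠ 0 := by positivity
  have h1 : HasDerivAt (fun ρ' : ℝ => ρ' ^ 2 + w ^ 2) (2 * ρ) ρ := by
    simpa using ((hasDerivAt_pow 2 ρ).add_const (w ^ 2))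
  have h2 : HasDerivAt (fun ρ' : ℝ => Real.sqrt (ρ' ^ 2 + w ^ 2))
      (ρ / Real.sqrt (ρ ^ 2 + w ^ 2)) ρ := by
    have h := (Real.hasDerivAt_sqrt hs).comp ρ h1
    refine h.congr_deriv ?_
    have hrpos : 0 < Real.sqrt (ρ ^ 2 + w ^ 2) := Real.sqrt_pos.2 (by positivity)
    field_simp
  have harg : Real.sqrt (ρ ^ 2 + w ^ 2) - w ≠ 0 := ne_of_gt (sub_pos.2 (ig_lt_sqrt hρ))
  have h := (Real.hasDerivAt_log harg).comp ρ (h2.sub_const w)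
  refine h.congr_deriv ?_
  exact (div_eq_inv_mul _ _).symm

private lemma ig_key (w : ℝ) (hw : w ≠ 0) {ρ : ℝ} (hρ : 0 < ρ) :
    ρ * ((ρ / Real.sqrt (ρ ^ 2 + w ^ 2)) / (Real.sqrt (ρ ^ 2 + w ^ 2) - w))
      = 1 + w / Real.sqrt (ρ ^ 2 + w ^ 2) := by
  set r := Real.sqrt (ρ ^ 2 + w ^ 2) with hrdef
  have hrpos : 0 < r := Real.sqrt_pos.2 (by positivity)
  have hrw : r - w ≠ 0 := ne_of_gt (sub_pos.2 (ig_lt_sqrt hρ))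
  have hr2 : r ^ 2 = ρ ^ 2 + w ^ 2 := Real.sq_sqrt (by positivity)
  field_simp
  nlinarith [hr2, hrpos]

theorem intervalGreen_radial_flux (a b : ℝ) (hab : a < b) (z : ℝ)
    (hza : z ≠ a) (hzb : z ≠ b) :
    ((a < z ∧ z < b) →
      Tendsto (fun ρ : ℝ => ρ * deriv (fun ρ' : ℝ => intervalGreen a b ρ' z) ρ)
        (𝓝[>] 0) (𝓝 2)) ∧
    ((z < a ∨ b < z) →
      Tendsto (fun ρ : ℝ => ρ * deriv (fun ρ' : ℝ => intervalGreen a b ρ' z) ρ)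
        (𝓝[>] 0) (𝓝 0)) := by
  have hwa : z - a ≠ 0 := sub_ne_zero.2 hza
  have hwb : z - b ≠ 0 := sub_ne_zero.2 hzb
  set g : ℝ → ℝ := fun ρ =>
    (z - a) / Real.sqrt (ρ ^ 2 + (z - a) ^ 2) - (z - b) / Real.sqrt (ρ ^ 2 + (z - b) ^ 2)
    with hg
  have heq : (fun ρ : ℝ => ρ * deriv (fun ρ' : ℝ => intervalGreen a b ρ' z) ρ)
      =ᶠ[𝓝[>] (0 : ℝ)] g := by
    filter_upwards [self_mem_nhdsWithin] with ρ (hρ : 0 < ρ)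
    have hda := ig_hasDeriv (z - a) hwa hρ
    have hdb := ig_hasDeriv (z - b) hwb hρ
    have hd : deriv (fun ρ' : ℝ => intervalGreen a b ρ' z) ρ =
        (ρ / Real.sqrt (ρ ^ 2 + (z - a) ^ 2)) / (Real.sqrt (ρ ^ 2 + (z - a) ^ 2) - (z - a)) -
        (ρ / Real.sqrt (ρ ^ 2 + (z - b) ^ 2)) / (Real.sqrt (ρ ^ 2 + (z - b) ^ 2) - (z - b)) := by
      exact (hda.sub hdb).deriv
    rw [hd, mul_sub, ig_key (z - a) hwa hρ, ig_key (z - b) hwb hρ, hg]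
    ring
  have hcont : ContinuousAt g 0 := by
    have hca : ∀ w : ℝ, w ≠ 0 →
        ContinuousAt (fun ρ : ℝ => w / Real.sqrt (ρ ^ 2 + w ^ 2)) 0 := by
      intro w hw
      apply ContinuousAt.div continuousAt_const
      · exact (Real.continuous_sqrt.comp (by continuity)).continuousAt
      · rw [show (0:ℝ) ^ 2 + w ^ 2 = w ^ 2 by ring, Real.sqrt_sq_eq_abs]
        simpa using hw
    exact (hca (z - a) hwa).sub (hca (z - b) hwb)
  have hsq : ∀ w : ℝ, Real.sqrt ((0:ℝ) ^ 2 + w ^ 2) = |w| := by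
    intro w; rw [show (0:ℝ) ^ 2 + w ^ 2 = w ^ 2 by ring, Real.sqrt_sq_eq_abs]
  have hg0 : g 0 = (z - a) / |z - a| - (z - b) / |z - b| := by
    simp only [hg, hsq]
  have htends : Tendsto g (𝓝[>] (0 : ℝ)) (𝓝 (g 0)) :=
    (hcont.continuousWithinAt).tendsto
  constructor
  · rintro ⟨h1, h2⟩
    have hv : g 0 = 2 := by
      rw [hg0, abs_of_pos (by linarith : (0:ℝ) < z - a),
        abs_of_neg (by linarith : z - b < 0), div_self hwa, div_neg, div_self hwb]
      norm_num
    exact Tendsto.congr' heq.symm (hv ▸ htends)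
  · rintro (h1 | h1)
    · have hv : g 0 = 0 := by
        rw [hg0, abs_of_neg (by linarith : z - a < 0),
          abs_of_neg (by linarith : z - b < 0), div_neg, div_self hwa,
          div_neg, div_self hwb]
        norm_num
      rw [hv] at htends
      exact Tendsto.congr' heq.symm htends
    · have hv : g 0 = 0 := by
        rw [hg0, abs_of_pos (by linarith : (0:ℝ) < z - a),
          abs_of_pos (by linarith : (0:ℝ) < z - b), div_self hwa, div_self hwb]
        ring
      rw [hv] at htends
      exact Tendsto.congr' heq.symm htends
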